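/- Let C > 0 and 0 < α < 1 be real constants, and let y : [0,∞) → ℝ be a differentiable function with y(t) > 0 for all t ≥ 0, satisfying the differential inequalities C·y(t) ≥ y'(t) ≥ C·y(t) − y(t)^α for all t ≥ 0. Then for every t ≥ 0 one has y(t) ≥ (y(0) − y(0)^α/(C(1−α)))·e^{C·t}. -/

import Mathlib

/-- **ODE comparison lemma** (Lemma 6.9 of Connell–McReynolds–Wang, "The natural flow and the
critical exponent"). If `y : [0,∞) → ℝ` is a positive differentiable function satisfying
`C·y ≥ y' ≥ C·y − y^α` for constants `C > 0` and `0 < α < 1`, then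
`y(t) ≥ (y(0) − y(0)^α/(C(1−α)))·e^{C t}` for all `t ≥ 0`. -/
theorem ode_comparison_lemma (C α : ℝ) (hC : 0 < C) (hα0 : 0 < α) (hα1 : α < 1)
    (y y' : ℝ → ℝ)
    (hpos : ∀ t, 0 ≤ t → 0 < y t)
    (hderiv : ∀ t, 0 ≤ t → HasDerivWithinAt y (y' t) (Set.Ici 0) t)
    (hupper : ∀ t, 0 ≤ t → y' t ≤ C * y t)
    (hlower : ∀ t, 0 ≤ t → C * y t - y t ^ α ≤ y' t) :
    ∀ t, 0 ≤ t → (y 0 - y 0 ^ α / (C * (1 - α))) * Real.exp (C * t) ≤ y t := by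
  have h1α : 0 < 1 - α := by linarith
  set K : ℝ := y 0 ^ α / (C * (1 - α)) with hK
  have hKpos : 0 < K := div_pos (Real.rpow_pos_of_pos (hpos 0 le_rfl) α)
    (mul_pos hC h1α)
  have hint : interior (Set.Ici (0:ℝ)) = Set.Ioi 0 := interior_Ici
  -- derivative of t ↦ exp (c * t)
  have hexp : ∀ (c t : ℝ), HasDerivAt (fun s => Real.exp (c * s))
      (c * Real.exp (c * t)) t := by
    intro c t
    have h1 : HasDerivAt (fun s => c * s) c t := by
      simpa using (hasDerivAt_id t).const_mul c
    have := (Real.hasDerivAt_exp (c * t)).comp t h1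
    exact h1.exp.congr_deriv (mul_comm _ _)
  -- continuity of y on Ici 0
  have hycont : ContinuousOn y (Set.Ici 0) := fun t ht =>
    (hderiv t ht).continuousWithinAt
  -- Step 1: upper Gronwall, G t = y t * exp (-C t) is antitone on Ici 0
  have hG : AntitoneOn (fun t => y t * Real.exp (-C * t)) (Set.Ici 0) := by
    apply antitoneOn_of_hasDerivWithinAt_nonpos (convex_Ici 0)
      (f' := fun t => (y' t - C * y t) * Real.exp (-C * t))
      (hycont.mul (Real.continuous_exp.comp (continuous_const.mul continuous_id)).continuousOn)
    · intro t ht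
      rw [hint] at ht ⊢
      have ht' : (0:ℝ) ≤ t := le_of_lt ht
      have := ((hderiv t ht').mono Set.Ioi_subset_Ici_self).mul
        ((hexp (-C) t).hasDerivWithinAt)
      refine this.congr_deriv ?_
      ring
    · intro t ht
      rw [hint] at ht
      have ht' : (0:ℝ) ≤ t := le_of_lt ht
      have := hupper t ht'
      have he : 0 < Real.exp (-C * t) := Real.exp_pos _
      nlinarith
  have hup : ∀ t, 0 ≤ t → y t ≤ y 0 * Real.exp (C * t) := by
    intro t ht
    have := hG (Set.mem_Ici.mpr le_rfl) ht ht
    simp only [mul_zero, neg_mul, Real.exp_zero, mul_one] at this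
    have he : 0 < Real.exp (C * t) := Real.exp_pos _
    calc y t = y t * Real.exp (-(C * t)) * Real.exp (C * t) := by
          rw [mul_assoc, ← Real.exp_add, neg_add_cancel, Real.exp_zero, mul_one]
      _ ≤ y 0 * Real.exp (C * t) := by nlinarith
  -- key pointwise bound: y t ^ α * exp (-C t) ≤ y 0 ^ α * exp (-(C*(1-α)) t)
  have hkey : ∀ t, 0 ≤ t →
      y t ^ α * Real.exp (-C * t) ≤ y 0 ^ α * Real.exp (-(C * (1 - α)) * t) := by
    intro t ht
    have h1 : y t ^ α ≤ (y 0 * Real.exp (C * t)) ^ α :=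
      Real.rpow_le_rpow (le_of_lt (hpos t ht)) (hup t ht) (le_of_lt hα0)
    have h2 : (y 0 * Real.exp (C * t)) ^ α
        = y 0 ^ α * Real.exp (α * (C * t)) := by
      rw [Real.mul_rpow (le_of_lt (hpos 0 le_rfl)) (le_of_lt (Real.exp_pos _)),
        ← Real.exp_mul, mul_comm (C * t) α]
    have he : 0 < Real.exp (-C * t) := Real.exp_pos _
    calc y t ^ α * Real.exp (-C * t)
        ≤ y 0 ^ α * Real.exp (α * (C * t)) * Real.exp (-C * t) := by
          rw [← h2]; exact mul_le_mul_of_nonneg_right h1 (le_of_lt he)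
      _ = y 0 ^ α * Real.exp (-(C * (1 - α)) * t) := by
          rw [mul_assoc, ← Real.exp_add]; ring_nf
  -- Step 2: F t = y t * exp (-C t) - K * exp (-(C(1-α)) t) is monotone on Ici 0
  have hF : MonotoneOn
      (fun t => y t * Real.exp (-C * t) - K * Real.exp (-(C * (1 - α)) * t))
      (Set.Ici 0) := by
    apply monotoneOn_of_hasDerivWithinAt_nonneg (convex_Ici 0)
      (f' := fun t => (y' t - C * y t) * Real.exp (-C * t)
        + y 0 ^ α * Real.exp (-(C * (1 - α)) * t))
    · exact (hycont.mul
        (Real.continuous_exp.comp (continuous_const.mul continuous_id)).continuousOn).sub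
        (continuous_const.mul
          (Real.continuous_exp.comp (continuous_const.mul continuous_id))).continuousOn
    · intro t ht
      rw [hint] at ht ⊢
      have ht' : (0:ℝ) ≤ t := le_of_lt ht
      have hA := ((hderiv t ht').mono Set.Ioi_subset_Ici_self).mul
        ((hexp (-C) t).hasDerivWithinAt)
      have hB := ((hexp (-(C * (1 - α))) t).hasDerivWithinAt
        (s := Set.Ioi (0:ℝ))).const_mul K
      have := hA.sub hB
      refine this.congr_deriv ?_
      have hKe : K * (-(C * (1 - α))) = -(y 0 ^ α) := by
        rw [hK]; field_simp
      clear_value K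
      linear_combination -Real.exp (-(C * (1 - α)) * t) * hKe
    · intro t ht
      rw [hint] at ht
      have ht' : (0:ℝ) ≤ t := le_of_lt ht
      have h1 := hlower t ht'
      have h2 := hkey t ht'
      have he : 0 < Real.exp (-C * t) := Real.exp_pos _
      nlinarith
  -- conclude
  intro t ht
  have h0 := hF (Set.mem_Ici.mpr le_rfl) ht ht
  simp only [mul_zero, neg_mul, Real.exp_zero, mul_one] at h0
  -- h0 : y 0 - K ≤ y t * exp (-(C*t)) - K * exp (-(C*(1-α)*t))
  have hKe : K * Real.exp (-(C * (1 - α) * t)) ≤ K := by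
    have : Real.exp (-(C * (1 - α) * t)) ≤ 1 := by
      apply Real.exp_le_one_iff.mpr
      have : 0 ≤ C * (1 - α) * t := by positivity
      linarith
    nlinarith
  have h1 : y 0 - K ≤ y t * Real.exp (-(C * t)) := by
    have hpos2 : 0 ≤ K * Real.exp (-(C * (1 - α) * t)) := by positivity
    linarith
  have he : 0 < Real.exp (C * t) := Real.exp_pos _
  calc (y 0 - K) * Real.exp (C * t)
      ≤ y t * Real.exp (-(C * t)) * Real.exp (C * t) :=
        mul_le_mul_of_nonneg_right h1 (le_of_lt he)
    _ = y t := by rw [mul_assoc, ← Real.exp_add, neg_add_cancel, Real.exp_zero, mul_one]
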